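/- arXiv:1903.08015 — 2 statements merged into one kernel-verified Lean document; each statement's English description precedes it below -/
import Mathlib

section
/- Let G = Z/2Z act on a finitely generated torsion-free abelian group M. Then M decomposes as a direct sum of G-submodules, each of which is isomorphic to one of: Z with trivial G-action, Z with the sign action (the generator acts by -1), or Z[G] ≅ Z² with the generator swapping the two coordinates. -/
open Module Submodule

section Aux

variable {M : Type*} [AddCommGroup M]

/-- The saturation of a submodule. -/
noncomputable def zsat (p : Submodule ℤ M) : Submodule ℤ M :=
  Submodule.comap p.mkQ (Submodule.torsion ℤ (M ⧸ p))

theorem mem_zsat {p : Submodule ℤ M} {x : M} :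
    x ∈ zsat p ↔ ∃ k : ℤ, k ≠ 0 ∧ k • x ∈ p := by
  rw [zsat, Submodule.mem_comap, Submodule.mem_torsion_iff]
  constructor
  · rintro ⟨⟨a, ha⟩, h⟩
    refine ⟨a, mem_nonZeroDivisors_iff_ne_zero.mp ha, ?_⟩
    have : p.mkQ (a • x) = 0 := by
      rw [map_smul]
      simpa [Submonoid.smul_def] using h
    rwa [← Submodule.Quotient.mk_eq_zero, ← Submodule.mkQ_apply]
  · rintro ⟨k, hk, hkx⟩
    refine ⟨⟨k, mem_nonZeroDivisors_of_ne_zero hk⟩, ?_⟩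
    show k • p.mkQ x = 0
    rw [← map_smul, Submodule.mkQ_apply, Submodule.Quotient.mk_eq_zero]
    exact hkx

theorem le_zsat (p : Submodule ℤ M) : p ≤ zsat p := fun x hx =>
  mem_zsat.mpr ⟨1, one_ne_zero, by simpa using hx⟩

theorem zsat_div {p : Submodule ℤ M} {k : ℤ} {x : M} (hk : k ≠ 0)
    (h : k • x ∈ zsat p) : x ∈ zsat p := by
  obtain ⟨l, hl, hlk⟩ := mem_zsat.mp h
  exact mem_zsat.mpr ⟨l * k, mul_ne_zero hl hk, by rwa [mul_smul]⟩

theorem noZeroSMulDivisors_quotient_of_div (p : Submodule ℤ M)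
    (hp : ∀ (k : ℤ) (x : M), k ≠ 0 → k • x ∈ p → x ∈ p) :
    NoZeroSMulDivisors ℤ (M ⧸ p) := by
  constructor
  intro c y hcy
  by_cases hc : c = 0
  · exact Or.inl hc
  · right
    obtain ⟨x, rfl⟩ := Submodule.mkQ_surjective p y
    rw [← map_smul, Submodule.mkQ_apply, Submodule.Quotient.mk_eq_zero] at hcy
    rw [Submodule.mkQ_apply, Submodule.Quotient.mk_eq_zero]
    exact hp c x hc hcy

theorem noZeroSMulDivisors_quotient_zsat (p : Submodule ℤ M) :
    NoZeroSMulDivisors ℤ (M ⧸ zsat p) :=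
  noZeroSMulDivisors_quotient_of_div _ fun k x hk h => zsat_div hk h

theorem exists_retraction [Module.Finite ℤ M] (A : Submodule ℤ M)
    (hq : NoZeroSMulDivisors ℤ (M ⧸ A)) :
    ∃ π : M →ₗ[ℤ] M, (∀ m, π m ∈ A) ∧ ∀ a ∈ A, π a = a := by
  haveI : Module.Finite ℤ (M ⧸ A) := Module.Finite.quotient ℤ A
  haveI : Module.Free ℤ (M ⧸ A) := Module.free_of_finite_type_torsion_free'
  obtain ⟨s, hs⟩ := Module.projective_lifting_property A.mkQ LinearMap.id
    (Submodule.mkQ_surjective A)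
  refine ⟨LinearMap.id - s ∘ₗ A.mkQ, fun m => ?_, fun a ha => ?_⟩
  · have h1 : A.mkQ (s (A.mkQ m)) = A.mkQ m := LinearMap.congr_fun hs (A.mkQ m)
    have : A.mkQ (m - s (A.mkQ m)) = 0 := by rw [map_sub, h1, sub_self]
    simpa [← Submodule.Quotient.mk_eq_zero, Submodule.mkQ_apply] using this
  · have : A.mkQ a = 0 := (Submodule.Quotient.mk_eq_zero A).mpr ha
    simp [this]

theorem zsat_span_singleton_gen [Module.Finite ℤ M] [NoZeroSMulDivisors ℤ M]
    (x0 : M) (h0 : x0 ≠ 0) :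
    ∃ e : M, e ∈ zsat (span ℤ {x0}) ∧ ∀ x ∈ zsat (span ℤ {x0}), ∃ m : ℤ, m • e = x := by
  classical
  set p := span ℤ {x0} with hp
  -- uniform scaling constant
  obtain ⟨s, hs⟩ : (zsat p).FG := IsNoetherian.noetherian (zsat p)
  have hch : ∀ g : M, ∃ k : ℤ, k ≠ 0 ∧ (g ∈ zsat p → k • g ∈ p) := by
    intro g
    by_cases hg : g ∈ zsat p
    · obtain ⟨k, hk, hkg⟩ := mem_zsat.mp hg
      exact ⟨k, hk, fun _ => hkg⟩
    · exact ⟨1, one_ne_zero, fun h => absurd h hg⟩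
  choose k hk hk' using hch
  set K : ℤ := ∏ g ∈ s, k g with hKdef
  have hK : K ≠ 0 := Finset.prod_ne_zero_iff.mpr fun g _ => hk g
  have hKs : ∀ x ∈ zsat p, K • x ∈ p := by
    have hsub : zsat p ≤ Submodule.comap (K • (LinearMap.id : M →ₗ[ℤ] M)) p := by
      rw [← hs, Submodule.span_le]
      intro g hg
      have hgz : g ∈ zsat p := hs ▸ Submodule.subset_span hg
      have hgs : g ∈ s := hg
      have : K • g = (∏ x ∈ s.erase g, k x) • (k g • g) := by
        rw [smul_smul, hKdef, ← Finset.prod_erase_mul s k hgs]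
      simp only [Set.mem_preimage, SetLike.mem_coe, Submodule.mem_comap,
        LinearMap.smul_apply, LinearMap.id_apply]
      rw [this]
      exact Submodule.smul_mem p _ (hk' g hgz)
    intro x hx
    simpa using hsub hx
  -- the scaled embedding into ℤ
  have hcod : ∀ c : ↥(zsat p), (K • (zsat p).subtype) c ∈ p := fun c => by
    simpa using hKs ↑c c.2
  set f : ↥(zsat p) →ₗ[ℤ] ↥p :=
    LinearMap.codRestrict p (K • (zsat p).subtype) hcod with hf
  set ψ : ↥(zsat p) →ₗ[ℤ] ℤ :=
    ((LinearEquiv.toSpanNonzeroSingleton ℤ M x0 h0).symm : ↥p ≃ₗ[ℤ] ℤ).toLinearMap ∘ₗ f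
    with hψ
  have hψapp : ∀ c : ↥(zsat p), ψ c =
      (LinearEquiv.toSpanNonzeroSingleton ℤ M x0 h0).symm ⟨K • ↑c, hcod c⟩ := fun c => rfl
  have hψinj : Function.Injective ψ := by
    intro x y hxy
    rw [hψapp, hψapp] at hxy
    have := (LinearEquiv.toSpanNonzeroSingleton ℤ M x0 h0).symm.injective hxy
    have h2 : K • (x : M) = K • (y : M) := congrArg Subtype.val this
    exact Subtype.ext (smul_right_injective M hK h2)
  obtain ⟨c, hc⟩ := (IsPrincipalIdealRing.principal (LinearMap.range ψ)).principal
  have hcmem : c ∈ LinearMap.range ψ := by rw [hc]; exact Submodule.mem_span_singleton_self c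
  obtain ⟨e', he'⟩ := hcmem
  refine ⟨↑e', e'.2, fun x hx => ?_⟩
  have : ψ ⟨x, hx⟩ ∈ LinearMap.range ψ := ⟨⟨x, hx⟩, rfl⟩
  rw [hc] at this
  obtain ⟨m, hm⟩ := Submodule.mem_span_singleton.mp this
  have : ψ (m • e') = ψ ⟨x, hx⟩ := by rw [map_smul, he', hm]
  have := hψinj this
  exact ⟨m, congrArg Subtype.val this⟩

theorem case1 [Module.Finite ℤ M] [NoZeroSMulDivisors ℤ M]
    (σ : M ≃ₗ[ℤ] M) (hσ : ∀ x : M, σ (σ x) = x)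
    (Fix Neg : Submodule ℤ M)
    (hFixMem : ∀ x : M, x ∈ Fix ↔ σ x = x)
    (hNegMem : ∀ x : M, x ∈ Neg ↔ σ x = -x)
    (g : M) (hg : g ∉ Fix ⊔ Neg) :
    ∃ (A : Submodule ℤ M) (r : M →ₗ[ℤ] M), (∀ m, r m ∈ A) ∧ (∀ a ∈ A, r a = a)
      ∧ (∀ m, r (σ m) = σ (r m)) ∧ (∃ a ∈ A, a ≠ 0) ∧
      ((∃ _e : ↥A ≃ₗ[ℤ] ℤ, ∀ x ∈ A, σ x = x) ∨
       (∃ _e : ↥A ≃ₗ[ℤ] ℤ, ∀ x ∈ A, σ x = -x) ∨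
       (∃ e : ↥A ≃ₗ[ℤ] ℤ × ℤ, ∀ x y : ↥A,
          σ (x : M) = (y : M) → e y = Prod.swap (e x))) := by
  have fixdiv : ∀ w0 : M, σ w0 = w0 → ∀ x ∈ zsat (span ℤ {w0}), σ x = x := by
    intro w0 hw0 x hx
    obtain ⟨kk, hkk, hkkx⟩ := mem_zsat.mp hx
    obtain ⟨cc, hcc⟩ := Submodule.mem_span_singleton.mp hkkx
    have h1 : kk • σ x = kk • x := by
      rw [← map_smul, ← hcc, map_smul, hw0, hcc]
    exact smul_right_injective M hkk h1
  have negdiv : ∀ w0 : M, σ w0 = -w0 → ∀ x ∈ zsat (span ℤ {w0}), σ x = -x := by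
    intro w0 hw0 x hx
    obtain ⟨kk, hkk, hkkx⟩ := mem_zsat.mp hx
    obtain ⟨cc, hcc⟩ := Submodule.mem_span_singleton.mp hkkx
    have h1 : kk • σ x = kk • (-x) := by
      rw [← map_smul, ← hcc, map_smul, hw0, smul_neg, hcc, smul_neg]
    exact smul_right_injective M hkk h1
  set e' := g + σ g with he'
  set f' := g - σ g with hf'
  have hσg : σ g = e' - g := by rw [he']; abel
  have hσe' : σ e' = e' := by rw [he', map_add, hσ]; abel
  have hσf' : σ f' = -f' := by rw [hf', map_sub, hσ]; abel
  have he'0 : e' ≠ 0 := by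
    intro h
    apply hg
    apply Submodule.mem_sup_right
    rw [hNegMem]
    have h0 : σ g + g = 0 := by rw [show σ g + g = e' from by rw [he']; abel]; exact h
    exact eq_neg_of_add_eq_zero_left h0
  have hf'0 : f' ≠ 0 := by
    intro h
    refine hg (Submodule.mem_sup_left ((hFixMem g).mpr ?_))
    have : g - σ g = 0 := hf' ▸ h
    rw [sub_eq_zero] at this
    exact this.symm
  obtain ⟨e, heI, hIgen⟩ := zsat_span_singleton_gen e' he'0
  obtain ⟨f, hfJ, hJgen⟩ := zsat_span_singleton_gen f' hf'0
  have hσe : σ e = e := fixdiv e' hσe' e heI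
  have hσf : σ f = -f := negdiv f' hσf' f hfJ
  obtain ⟨a, ha⟩ := hIgen e' (le_zsat _ (Submodule.mem_span_singleton_self e'))
  obtain ⟨bb, hbb⟩ := hJgen f' (le_zsat _ (Submodule.mem_span_singleton_self f'))
  have he0 : e ≠ 0 := fun h => he'0 (by rw [← ha, h, smul_zero])
  have hf0 : f ≠ 0 := fun h => hf'0 (by rw [← hbb, h, smul_zero])
  have ha0 : a ≠ 0 := fun h => he'0 (by rw [← ha, h, zero_smul])
  have hbb0 : bb ≠ 0 := fun h => hf'0 (by rw [← hbb, h, zero_smul])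
  -- a is odd
  have haodd : Odd a := by
    rcases Int.even_or_odd a with ⟨c, hc⟩ | h
    · exfalso
      apply hg
      have h1 : σ (c • e) = c • e := by rw [map_smul, hσe]
      have h2 : σ (g - c • e) = -(g - c • e) := by
        rw [map_sub, h1, hσg, ← ha, hc]
        module
      exact Submodule.mem_sup.mpr ⟨c • e, (hFixMem _).mpr h1, g - c • e, (hNegMem _).mpr h2,
        by abel⟩
    · exact h
  have hbbodd : Odd bb := by
    rcases Int.even_or_odd bb with ⟨d, hd⟩ | h
    · exfalso
      apply hg
      have h1 : σ (d • f) = -(d • f) := by rw [map_smul, hσf, smul_neg]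
      have h2 : σ (g - d • f) = g - d • f := by
        have hσg2 : σ g = g - f' := by rw [hf']; abel
        rw [map_sub, map_smul, hσf, hσg2, ← hbb, hd]
        module
      exact Submodule.mem_sup.mpr ⟨g - d • f, (hFixMem _).mpr h2, d • f,
        (hNegMem _).mpr h1, by abel⟩
    · exact h
  obtain ⟨c, hc⟩ := haodd
  obtain ⟨d, hd⟩ := hbbodd
  set w := g - c • e - d • f with hwdef
  have hσg2 : σ g = g - f' := by rw [hf']; abel
  have hwe : w + σ w = e := by
    rw [hwdef, map_sub, map_sub, map_smul, map_smul, hσe, hσf, hσg,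
      show e' = a • e from ha.symm, hc]
    module
  have hwf : w - σ w = f := by
    rw [hwdef, map_sub, map_sub, map_smul, map_smul, hσe, hσf, hσg2,
      show f' = bb • f from hbb.symm, hd]
    module
  have hw0 : w ≠ 0 := by
    intro h
    apply he0
    rw [← hwe, h, map_zero, add_zero]
  have li : LinearIndependent ℤ ![w, σ w] := by
    rw [LinearIndependent.pair_iff]
    intro s t hst
    have hstσ : s • σ w + t • w = 0 := by
      have h9 := congrArg σ hst
      rwa [map_add, map_smul, map_smul, hσ, map_zero] at h9
    have h1 : (s + t) • e = 0 := by
      rw [← hwe]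
      calc (s + t) • (w + σ w) = (s • w + t • σ w) + (s • σ w + t • w) := by module
      _ = 0 := by rw [hst, hstσ, add_zero]
    have h2 : (s - t) • f = 0 := by
      rw [← hwf]
      calc (s - t) • (w - σ w) = (s • w + t • σ w) - (s • σ w + t • w) := by module
      _ = 0 := by rw [hst, hstσ, sub_self]
    have hst1 : s + t = 0 := by
      rcases smul_eq_zero.mp h1 with h | h
      · exact h
      · exact absurd h he0
    have hst2 : s - t = 0 := by
      rcases smul_eq_zero.mp h2 with h | h
      · exact h
      · exact absurd h hf0
    constructor <;> omega
  set A : Submodule ℤ M := span ℤ (Set.range ![w, σ w]) with hA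
  have hrange : Set.range ![w, σ w] = {w, σ w} := by
    ext z
    simp [Fin.exists_fin_two]
    tauto
  have hmemA : ∀ z : M, z ∈ A ↔ ∃ m n : ℤ, m • w + n • σ w = z := by
    intro z; rw [hA, hrange]; exact Submodule.mem_span_pair
  have hw_mem : w ∈ A := by rw [hmemA]; exact ⟨1, 0, by simp⟩
  have hsw_mem : σ w ∈ A := by rw [hmemA]; exact ⟨0, 1, by simp⟩
  have hdiv : ∀ (k : ℤ) (x : M), k ≠ 0 → k • x ∈ A → x ∈ A := by
    intro k x hk hkx
    obtain ⟨m, n, hmn⟩ := (hmemA _).mp hkx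
    have hmnσ : m • σ w + n • w = k • σ x := by
      have h9 := congrArg σ hmn
      rwa [map_add, map_smul, map_smul, hσ, map_smul] at h9
    have hxe : k • (x + σ x) = (m + n) • e := by
      rw [← hwe]
      calc k • (x + σ x) = k • x + k • σ x := by module
      _ = (m • w + n • σ w) + (m • σ w + n • w) := by rw [hmn, hmnσ]
      _ = (m + n) • (w + σ w) := by module
    have hxf : k • (x - σ x) = (m - n) • f := by
      rw [← hwf]
      calc k • (x - σ x) = k • x - k • σ x := by module
      _ = (m • w + n • σ w) - (m • σ w + n • w) := by rw [hmn, hmnσ]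
      _ = (m - n) • (w - σ w) := by module
    have hxI : x + σ x ∈ zsat (span ℤ {e'}) := by
      rw [mem_zsat]
      refine ⟨k * a, mul_ne_zero hk ha0, ?_⟩
      have h9 : (k * a) • (x + σ x) = (m + n) • e' := by
        rw [mul_comm, mul_smul, hxe, smul_comm, ha]
      rw [h9]
      exact Submodule.smul_mem _ _ (Submodule.mem_span_singleton_self e')
    obtain ⟨p, hp⟩ := hIgen _ hxI
    have hxJ : x - σ x ∈ zsat (span ℤ {f'}) := by
      rw [mem_zsat]
      refine ⟨k * bb, mul_ne_zero hk hbb0, ?_⟩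
      have h9 : (k * bb) • (x - σ x) = (m - n) • f' := by
        rw [mul_comm, mul_smul, hxf, smul_comm, hbb]
      rw [h9]
      exact Submodule.smul_mem _ _ (Submodule.mem_span_singleton_self f')
    obtain ⟨q, hq⟩ := hJgen _ hxJ
    have hkp : k * p = m + n := by
      apply smul_left_injective ℤ he0
      show (k * p) • e = (m + n) • e
      rw [mul_smul, hp, hxe]
    have hkq : k * q = m - n := by
      apply smul_left_injective ℤ hf0
      show (k * q) • f = (m - n) • f
      rw [mul_smul, hq, hxf]
    have h2x : p • e + q • f = x + x := by rw [hp, hq]; abel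
    rcases Int.even_or_odd (p + q) with ⟨u, hu⟩ | ⟨u, hu⟩
    · set z := u • w + (u - q) • σ w with hz
      have hzA : z ∈ A := (hmemA _).mpr ⟨u, u - q, rfl⟩
      have hp' : p = u + u - q := by omega
      have hxz : x + x = z + z := by
        rw [← h2x, ← hwe, ← hwf, hz, hp']
        module
      have h4 : (2:ℤ) • (x - z) = 0 := by
        have h5 : (2:ℤ) • (x - z) = (x + x) - (z + z) := by module
        rw [h5, hxz, sub_self]
      rcases smul_eq_zero.mp h4 with h | h
      · norm_num at h
      · rw [sub_eq_zero.mp h]; exact hzA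
    · exfalso
      rcases Int.even_or_odd p with ⟨p', hp'⟩ | ⟨p', hp'⟩
      · -- p even, q odd : f would be divisible by 2
        set z := x - p' • e - (u - p') • f with hz
        have hzz : z + z = f := by
          have h5 : z + z = (x + x) - (p' + p') • e - (2 * (u - p')) • f := by
            rw [hz]; module
          rw [h5, ← h2x, ← hp', show (2 * (u - p')) = q - 1 by omega]
          module
        have hzJ : z ∈ zsat (span ℤ {f'}) := by
          rw [mem_zsat]
          refine ⟨2 * bb, mul_ne_zero two_ne_zero hbb0, ?_⟩
          have h9 : (2 * bb) • z = bb • (z + z) := by module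
          rw [h9, hzz, hbb]
          exact Submodule.mem_span_singleton_self f'
        obtain ⟨m', hm'⟩ := hJgen _ hzJ
        have h7 : (2 * m' - 1) • f = 0 := by
          have h8 : (2 * m' - 1) • f = (m' • f + m' • f) - f := by module
          rw [h8, hm', hzz, sub_self]
        rcases smul_eq_zero.mp h7 with h | h
        · omega
        · exact hf0 h
      · -- p odd, q even : e would be divisible by 2
        set z := x - p' • e - (u - p') • f with hz
        have hq' : q = (u - p') + (u - p') := by omega
        have hzz : z + z = e := by
          have h5 : z + z = (x + x) - (p' + p') • e - ((u - p') + (u - p')) • f := by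
            rw [hz]; module
          rw [h5, ← h2x, ← hq', show (p' + p' : ℤ) = p - 1 by omega]
          module
        have hzI : z ∈ zsat (span ℤ {e'}) := by
          rw [mem_zsat]
          refine ⟨2 * a, mul_ne_zero two_ne_zero ha0, ?_⟩
          have h9 : (2 * a) • z = a • (z + z) := by module
          rw [h9, hzz, ha]
          exact Submodule.mem_span_singleton_self e'
        obtain ⟨m', hm'⟩ := hIgen _ hzI
        have h7 : (2 * m' - 1) • e = 0 := by
          have h8 : (2 * m' - 1) • e = (m' • e + m' • e) - e := by module
          rw [h8, hm', hzz, sub_self]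
        rcases smul_eq_zero.mp h7 with h | h
        · omega
        · exact he0 h
  obtain ⟨π, hπ1, hπ2⟩ := exists_retraction A (noZeroSMulDivisors_quotient_of_div A hdiv)
  set bas : Basis (Fin 2) ℤ ↥A := Basis.span li with hbas
  have hb0 : (bas 0 : M) = w := by rw [hbas, Basis.span_apply]; simp
  have hb1 : (bas 1 : M) = σ w := by rw [hbas, Basis.span_apply]; simp
  set π' : M →ₗ[ℤ] ↥A := LinearMap.codRestrict A π hπ1 with hπ'
  set φ : M →ₗ[ℤ] ℤ := bas.coord 0 ∘ₗ π' with hφ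
  have hπ'w : π' w = bas 0 := by
    apply Subtype.val_injective
    rw [hb0]
    exact hπ2 w hw_mem
  have hπ'sw : π' (σ w) = bas 1 := by
    apply Subtype.val_injective
    rw [hb1]
    exact hπ2 _ hsw_mem
  have hφw : φ w = 1 := by
    rw [hφ, LinearMap.comp_apply, hπ'w, Basis.coord_apply, Basis.repr_self]
    simp
  have hφsw : φ (σ w) = 0 := by
    rw [hφ, LinearMap.comp_apply, hπ'sw, Basis.coord_apply, Basis.repr_self]
    simp
  set r : M →ₗ[ℤ] M := LinearMap.toSpanSingleton ℤ M w ∘ₗ φ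
      + LinearMap.toSpanSingleton ℤ M (σ w) ∘ₗ (φ ∘ₗ σ.toLinearMap) with hr
  have hrapp : ∀ m, r m = φ m • w + φ (σ m) • σ w := fun m => by
    simp [hr, LinearMap.toSpanSingleton_apply]
  have hrw : r w = w := by rw [hrapp, hφw, hφsw]; simp
  have hrsw : r (σ w) = σ w := by rw [hrapp, hφsw, hσ, hφw]; simp
  have hr1 : ∀ m, r m ∈ A := fun m => by
    rw [hrapp]
    exact Submodule.add_mem _ (Submodule.smul_mem _ _ hw_mem) (Submodule.smul_mem _ _ hsw_mem)
  have hr2 : ∀ aa ∈ A, r aa = aa := by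
    intro aa haa
    obtain ⟨m, n, hmn⟩ := (hmemA _).mp haa
    rw [← hmn, map_add, map_smul, map_smul, hrw, hrsw]
  have hr3 : ∀ m, r (σ m) = σ (r m) := by
    intro m
    rw [hrapp (σ m), hrapp m, map_add, map_smul, map_smul, hσ m, hσ w]
    abel
  set E : ↥A ≃ₗ[ℤ] ℤ × ℤ := bas.equivFun.trans (LinearEquiv.finTwoArrow ℤ ℤ) with hE
  refine ⟨A, r, hr1, hr2, hr3, ⟨w, hw_mem, hw0⟩, Or.inr (Or.inr ⟨E, ?_⟩)⟩
  intro x y hxy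
  have hx : (x : M) = bas.repr x 0 • w + bas.repr x 1 • σ w := by
    have h5 := congrArg (Subtype.val) (bas.sum_repr x)
    rw [Fin.sum_univ_two] at h5
    rw [← h5]
    simp [hb0, hb1]
  have hy : y = bas.repr x 1 • bas 0 + bas.repr x 0 • bas 1 := by
    apply Subtype.val_injective
    rw [← hxy, hx, map_add, map_smul, map_smul, hσ w]
    simp only [Submodule.coe_add, SetLike.val_smul, hb0, hb1]
    abel
  have hEx : E x = (bas.repr x 0, bas.repr x 1) := by
    simp [hE, Basis.equivFun_apply]
  have hEy : E y = (bas.repr x 1, bas.repr x 0) := by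
    rw [hy]
    simp [hE, Basis.equivFun_apply, Basis.repr_self, Finsupp.single_apply]
  rw [hEx, hEy]
  rfl

/-- A rank-one saturated submodule around a nonzero vector, with a retraction. -/
theorem cyclic_sat [Module.Finite ℤ M] [NoZeroSMulDivisors ℤ M] (e0 : M) (h0 : e0 ≠ 0) :
    ∃ (A : Submodule ℤ M) (_E : ↥A ≃ₗ[ℤ] ℤ) (π : M →ₗ[ℤ] M),
      e0 ∈ A ∧ (∀ x ∈ A, ∃ k : ℤ, k ≠ 0 ∧ k • x ∈ span ℤ {e0}) ∧
      (∀ m, π m ∈ A) ∧ (∀ a ∈ A, π a = a) := by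
  set A := zsat (span ℤ {e0}) with hA
  have he0A : e0 ∈ A := le_zsat _ (Submodule.mem_span_singleton_self e0)
  obtain ⟨e, heA, hgen⟩ := zsat_span_singleton_gen e0 h0
  have he : e ≠ 0 := by
    rintro rfl
    obtain ⟨m, hm⟩ := hgen e0 he0A
    simp at hm
    exact h0 hm.symm
  set eA : ↥A := ⟨e, heA⟩ with heAdef
  have heAne : eA ≠ 0 := fun h => he (congrArg Subtype.val h)
  have hbij : Function.Bijective (LinearMap.toSpanSingleton ℤ ↥A eA) := by
    constructor
    · intro a b hab
      simp only [LinearMap.toSpanSingleton_apply] at hab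
      exact smul_left_injective ℤ heAne hab
    · intro x
      obtain ⟨m, hm⟩ := hgen ↑x x.2
      exact ⟨m, by simp [LinearMap.toSpanSingleton_apply]; exact Subtype.ext hm⟩
  obtain ⟨π, hπ1, hπ2⟩ := exists_retraction A (noZeroSMulDivisors_quotient_zsat _)
  exact ⟨A, (LinearEquiv.ofBijective _ hbij).symm, π, he0A,
    fun x hx => mem_zsat.mp hx, hπ1, hπ2⟩

theorem key_step [Module.Finite ℤ M] [NoZeroSMulDivisors ℤ M]
    (σ : M ≃ₗ[ℤ] M) (hσ : ∀ x : M, σ (σ x) = x) (hnt : ∃ x : M, x ≠ 0) :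
    ∃ (A K : Submodule ℤ M), IsCompl A K ∧ (∀ x ∈ A, σ x ∈ A) ∧ (∀ x ∈ K, σ x ∈ K) ∧
      Nontrivial ↥A ∧
      ((∃ _e : ↥A ≃ₗ[ℤ] ℤ, ∀ x ∈ A, σ x = x) ∨
       (∃ _e : ↥A ≃ₗ[ℤ] ℤ, ∀ x ∈ A, σ x = -x) ∨
       (∃ e : ↥A ≃ₗ[ℤ] ℤ × ℤ, ∀ x y : ↥A,
          σ (x : M) = (y : M) → e y = Prod.swap (e x))) := by
  suffices h : ∃ (A : Submodule ℤ M) (r : M →ₗ[ℤ] M), (∀ m, r m ∈ A) ∧ (∀ a ∈ A, r a = a)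
      ∧ (∀ m, r (σ m) = σ (r m)) ∧ (∃ a ∈ A, a ≠ 0) ∧
      ((∃ _e : ↥A ≃ₗ[ℤ] ℤ, ∀ x ∈ A, σ x = x) ∨
       (∃ _e : ↥A ≃ₗ[ℤ] ℤ, ∀ x ∈ A, σ x = -x) ∨
       (∃ e : ↥A ≃ₗ[ℤ] ℤ × ℤ, ∀ x y : ↥A,
          σ (x : M) = (y : M) → e y = Prod.swap (e x))) by
    obtain ⟨A, r, hr1, hr2, hr3, ⟨a0, ha0A, ha0⟩, hty⟩ := h
    have hstabA : ∀ x ∈ A, σ x ∈ A := fun x hx => by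
      rw [← hr2 x hx, ← hr3 x]; exact hr1 _
    refine ⟨A, LinearMap.ker r, ⟨?_, ?_⟩, hstabA, ?_, ?_, hty⟩
    · rw [Submodule.disjoint_def]
      intro x hx hxk
      rw [LinearMap.mem_ker] at hxk
      rw [← hr2 x hx, hxk]
    · rw [codisjoint_iff_le_sup]
      intro m _
      refine Submodule.mem_sup.mpr ⟨r m, hr1 m, m - r m, ?_, by abel⟩
      rw [LinearMap.mem_ker, map_sub, hr2 _ (hr1 m), sub_self]
    · intro x hx
      rw [LinearMap.mem_ker] at hx ⊢
      rw [hr3, hx, map_zero]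
    · exact nontrivial_of_ne ⟨a0, ha0A⟩ 0 (fun h => ha0 (congrArg Subtype.val h))
  -- the fixed and anti-fixed submodules
  set Fix : Submodule ℤ M := LinearMap.ker (σ.toLinearMap - LinearMap.id) with hFix
  set Neg : Submodule ℤ M := LinearMap.ker (σ.toLinearMap + LinearMap.id) with hNeg
  have hFixMem : ∀ x : M, x ∈ Fix ↔ σ x = x := by
    intro x; rw [hFix, LinearMap.mem_ker, LinearMap.sub_apply, LinearMap.id_apply,
      sub_eq_zero]; rfl
  have hNegMem : ∀ x : M, x ∈ Neg ↔ σ x = -x := by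
    intro x
    rw [hNeg, LinearMap.mem_ker, LinearMap.add_apply, LinearMap.id_apply, add_eq_zero_iff_eq_neg]
    rfl
  by_cases hsup : ∀ g : M, g ∈ Fix ⊔ Neg
  · -- M = Fix ⊕ Neg
    by_cases hF : ∃ x : M, x ∈ Fix ∧ x ≠ 0
    · -- split off a trivial summand
      obtain ⟨e0, he0F, he0⟩ := hF
      obtain ⟨A, E, π, he0A, hAdiv, hπ1, hπ2⟩ := cyclic_sat e0 he0
      have hA_fix : ∀ x ∈ A, σ x = x := by
        intro x hx
        obtain ⟨kk, hkk, hkkx⟩ := hAdiv x hx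
        obtain ⟨cc, hcc⟩ := Submodule.mem_span_singleton.mp hkkx
        have h1 : σ (kk • x) = kk • x := by
          rw [← hcc, map_smul, (hFixMem e0).mp he0F]
        rw [map_smul] at h1
        have := sub_eq_zero.mpr h1
        rw [← smul_sub] at this
        rcases smul_eq_zero.mp this with h | h
        · exact absurd h hkk
        · exact sub_eq_zero.mp h
      have hc : IsCompl Fix Neg := by
        constructor
        · rw [Submodule.disjoint_def]
          intro x hx1 hx2
          have h1 := (hFixMem x).mp hx1
          have h2 := (hNegMem x).mp hx2
          have : (2 : ℤ) • x = 0 := by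
            rw [two_smul]
            nth_rewrite 1 [← h1]
            rw [h2]
            abel
          rcases smul_eq_zero.mp this with h | h
          · norm_num at h
          · exact h
        · rw [codisjoint_iff_le_sup]; intro m _; exact hsup m
      set proj : M →ₗ[ℤ] M := Fix.subtype ∘ₗ Fix.projectionOnto Neg hc with hproj
      have hprojFix : ∀ x ∈ Fix, proj x = x := by
        intro x hx
        have : Fix.projectionOnto Neg hc x = ⟨x, hx⟩ :=
          Submodule.projectionOnto_apply_left hc ⟨x, hx⟩
        simp [hproj, this]
      have hprojσ : ∀ m : M, proj (σ m) = proj m := by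
        intro m
        have hmem : σ m - m ∈ Neg := by
          rw [hNegMem]
          rw [map_sub, hσ m]
          abel
        have hsplit : σ m = m + (σ m - m) := by abel
        rw [hsplit, map_add]
        have : proj (σ m - m) = 0 := by
          have := Submodule.projectionOnto_apply_right hc ⟨σ m - m, hmem⟩
          simp [hproj, this]
        rw [this, add_zero]
      refine ⟨A, π ∘ₗ proj, fun m => hπ1 _, fun a ha => ?_, fun m => ?_, ⟨e0, he0A, he0⟩,
        Or.inl ⟨E, hA_fix⟩⟩
      · have haF : a ∈ Fix := (hFixMem a).mpr (hA_fix a ha)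
        simp only [LinearMap.comp_apply]
        rw [hprojFix a haF, hπ2 a ha]
      · simp only [LinearMap.comp_apply]
        rw [hprojσ m, hA_fix _ (hπ1 (proj m))]
    · -- σ = -1 everywhere
      push_neg at hF
      have hneg : ∀ m : M, σ m = -m := by
        intro m
        rcases Submodule.mem_sup.mp (hsup m) with ⟨u, hu, v, hv, rfl⟩
        rw [hF u hu, zero_add]
        exact (hNegMem v).mp hv
      obtain ⟨e0, he0⟩ := hnt
      obtain ⟨A, E, π, he0A, hAdiv, hπ1, hπ2⟩ := cyclic_sat e0 he0
      refine ⟨A, π, hπ1, hπ2, fun m => ?_, ⟨e0, he0A, he0⟩,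
        Or.inr (Or.inl ⟨E, fun x _ => hneg x⟩)⟩
      rw [hneg m, hneg (π m), map_neg]
  · -- there is an element outside Fix ⊔ Neg : split off a ℤ[G] summand
    push_neg at hsup
    obtain ⟨g, hg⟩ := hsup
    exact case1 σ hσ Fix Neg hFixMem hNegMem g hg


end Aux

section Main

universe u

theorem decomp_trivial (M : Type u) [AddCommGroup M] (σ : M ≃ₗ[ℤ] M)
    (hs : ∀ x : M, x = 0) :
    ∃ (n : ℕ) (A : Fin n → Submodule ℤ M), DirectSum.IsInternal A ∧
      ∀ i : Fin n, (∀ x ∈ A i, σ x ∈ A i) ∧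
        ((∃ _e : ↥(A i) ≃ₗ[ℤ] ℤ, ∀ x ∈ A i, σ x = x) ∨
         (∃ _e : ↥(A i) ≃ₗ[ℤ] ℤ, ∀ x ∈ A i, σ x = -x) ∨
         (∃ e : ↥(A i) ≃ₗ[ℤ] ℤ × ℤ, ∀ x y : ↥(A i),
            σ (x : M) = (y : M) → e y = Prod.swap (e x))) := by
  refine ⟨0, fun i => i.elim0, ?_, fun i => i.elim0⟩
  apply DirectSum.isInternal_submodule_of_iSupIndep_of_iSup_eq_top
  · intro i; exact i.elim0
  · rw [eq_top_iff]
    intro x _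
    rw [hs x]
    exact Submodule.zero_mem _

theorem decomp (N : ℕ) : ∀ (M : Type u) [AddCommGroup M] [Module.Finite ℤ M]
    [NoZeroSMulDivisors ℤ M] (σ : M ≃ₗ[ℤ] M), (∀ x : M, σ (σ x) = x) →
    Module.finrank ℤ M ≤ N →
    ∃ (n : ℕ) (A : Fin n → Submodule ℤ M), DirectSum.IsInternal A ∧
      ∀ i : Fin n, (∀ x ∈ A i, σ x ∈ A i) ∧
        ((∃ _e : ↥(A i) ≃ₗ[ℤ] ℤ, ∀ x ∈ A i, σ x = x) ∨
         (∃ _e : ↥(A i) ≃ₗ[ℤ] ℤ, ∀ x ∈ A i, σ x = -x) ∨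
         (∃ e : ↥(A i) ≃ₗ[ℤ] ℤ × ℤ, ∀ x y : ↥(A i),
            σ (x : M) = (y : M) → e y = Prod.swap (e x))) := by
  induction N with
  | zero =>
    intro M _ _ _ σ hσ hrank
    have h0 : Module.finrank ℤ M = 0 := Nat.le_zero.mp hrank
    have : Subsingleton M := Module.finrank_zero_iff.mp h0
    exact decomp_trivial M σ (fun x => Subsingleton.elim x 0)
  | succ N ih =>
    intro M _ _ _ σ hσ hrank
    by_cases hnt : ∃ x : M, x ≠ 0
    · obtain ⟨A, K, hc, hstabA, hstabK, hntA, hty⟩ := key_step σ hσ hnt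
      -- the restricted involution on K
      have hstabK' : ∀ x ∈ K, σ.toLinearMap x ∈ K := hstabK
      set σK : ↥K ≃ₗ[ℤ] ↥K := LinearEquiv.ofLinear
        (σ.toLinearMap.restrict hstabK') (σ.toLinearMap.restrict hstabK')
        (by ext x; exact hσ ↑x) (by ext x; exact hσ ↑x) with hσKdef
      have hσKcoe : ∀ x : ↥K, (σK x : M) = σ (x : M) := fun x => rfl
      have hσK : ∀ x : ↥K, σK (σK x) = x := fun x =>
        Subtype.val_injective (hσ ↑x)
      -- rank bookkeeping
      haveI : Module.Free ℤ ↥A := Module.free_of_finite_type_torsion_free'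
      haveI : Module.Free ℤ ↥K := Module.free_of_finite_type_torsion_free'
      have hfr : Module.finrank ℤ ↥A + Module.finrank ℤ ↥K = Module.finrank ℤ M := by
        rw [← Module.finrank_prod]
        exact (Submodule.prodEquivOfIsCompl A K hc).finrank_eq
      have hposA : 0 < Module.finrank ℤ ↥A := Module.finrank_pos_iff.mpr hntA
      have hrankK : Module.finrank ℤ ↥K ≤ N := by omega
      haveI : NoZeroSMulDivisors ℤ ↥K := ⟨fun {c x} h => by
        rcases smul_eq_zero.mp (show c • (x : M) = 0 from congrArg Subtype.val h) with h' | h'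
        · exact Or.inl h'
        · exact Or.inr (Subtype.ext h')⟩
      obtain ⟨n, B, hint, hprops⟩ := ih ↥K σK hσK hrankK
      refine ⟨n + 1, Fin.cons A (fun j => (B j).map K.subtype), ?_, ?_⟩
      · apply DirectSum.isInternal_submodule_of_iSupIndep_of_iSup_eq_top
        · intro i
          refine Fin.cases ?_ ?_ i
          · rw [Fin.cons_zero]
            refine Disjoint.mono_right ?_ hc.disjoint
            refine iSup_le fun j => iSup_le fun hj => ?_
            obtain ⟨l, rfl⟩ := Fin.eq_succ_of_ne_zero hj
            rw [Fin.cons_succ]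
            exact Submodule.map_subtype_le K (B l)
          · intro k
            rw [Fin.cons_succ]
            have hle2 : (⨆ j, ⨆ (_ : j ≠ k.succ), Fin.cons A
                (fun j => (B j).map K.subtype) j) ≤
                A ⊔ (⨆ (j : Fin n) (_ : j ≠ k), B j).map K.subtype := by
              refine iSup_le fun j => iSup_le fun hj => ?_
              rcases eq_or_ne j 0 with rfl | hj0
              · rw [Fin.cons_zero]; exact le_sup_left
              · obtain ⟨l, rfl⟩ := Fin.eq_succ_of_ne_zero hj0
                rw [Fin.cons_succ]
                have hlk : l ≠ k := fun h => hj (by rw [h])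
                refine le_trans ?_ le_sup_right
                exact Submodule.map_mono (le_iSup₂ (f := fun j _ => B j) l hlk)
            refine Disjoint.mono_right hle2 ?_
            rw [Submodule.disjoint_def]
            intro x hx hx2
            have hxK : x ∈ K := Submodule.map_subtype_le K (B k) hx
            rcases Submodule.mem_sup.mp hx2 with ⟨aa, haa, cc, hcc, rfl⟩
            have hccK : cc ∈ K := Submodule.map_subtype_le K _ hcc
            have haaK : aa ∈ K := by
              have : aa = (aa + cc) - cc := by abel
              rw [this]
              exact Submodule.sub_mem K hxK hccK
            have haa0 : aa = 0 := Submodule.disjoint_def.mp hc.disjoint aa haa haaK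
            rw [haa0, zero_add] at hx ⊢
            have hmap : cc ∈ (B k).map K.subtype ⊓ (⨆ (j : Fin n) (_ : j ≠ k), B j).map K.subtype :=
              ⟨hx, hcc⟩
            rw [← Submodule.map_inf _ (Submodule.injective_subtype K)] at hmap
            have hbot : B k ⊓ (⨆ (j : Fin n) (_ : j ≠ k), B j) = ⊥ :=
              disjoint_iff.mp (hint.submodule_iSupIndep k)
            rw [hbot, Submodule.map_bot, Submodule.mem_bot] at hmap
            exact hmap
        · rw [eq_top_iff, ← hc.sup_eq_top]
          apply sup_le
          · exact le_iSup_of_le 0 le_rfl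
          · have h2 : K ≤ ⨆ j, Submodule.map K.subtype (B j) := by
              intro x hxK
              have hmem : (⟨x, hxK⟩ : ↥K) ∈ (⊤ : Submodule ℤ ↥K) := trivial
              rw [← hint.submodule_iSup_eq_top] at hmem
              have h3 : x ∈ Submodule.map K.subtype (⨆ j, B j) := ⟨⟨x, hxK⟩, hmem, rfl⟩
              rwa [Submodule.map_iSup] at h3
            exact le_trans h2 (iSup_le fun j => le_iSup_of_le j.succ le_rfl)
      · intro i
        refine Fin.cases ?_ ?_ i
        · rw [Fin.cons_zero]
          exact ⟨hstabA, hty⟩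
        · intro j
          rw [Fin.cons_succ]
          obtain ⟨hstabj, htyj⟩ := hprops j
          constructor
          · rintro x ⟨y, hy, rfl⟩
            exact ⟨σK y, hstabj y hy, (hσKcoe y).symm⟩
          · rcases htyj with ⟨E, hE⟩ | ⟨E, hE⟩ | ⟨E, hE⟩
            · left
              refine ⟨(K.equivSubtypeMap (B j)).symm.trans E, ?_⟩
              rintro x ⟨y, hy, rfl⟩
              show σ (y : M) = (y : M)
              rw [← hσKcoe y, hE y hy]
            · right; left
              refine ⟨(K.equivSubtypeMap (B j)).symm.trans E, ?_⟩
              rintro x ⟨y, hy, rfl⟩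
              show σ (y : M) = -(y : M)
              rw [← hσKcoe y, hE y hy]
              rfl
            · right; right
              refine ⟨(K.equivSubtypeMap (B j)).symm.trans E, ?_⟩
              intro x y hxy
              set x0 := (K.equivSubtypeMap (B j)).symm x with hx0
              set y0 := (K.equivSubtypeMap (B j)).symm y with hy0
              have hx0c : ((x0 : ↥K) : M) = (x : M) := Submodule.equivSubtypeMap_symm_apply x
              have hy0c : ((y0 : ↥K) : M) = (y : M) := Submodule.equivSubtypeMap_symm_apply y
              have hkey : σK (x0 : ↥K) = (y0 : ↥K) := by
                apply Subtype.val_injective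
                rw [hσKcoe, hx0c, hxy, hy0c]
              have := hE x0 y0 hkey
              show E y0 = Prod.swap (E x0)
              exact this
    · have hs : ∀ x : M, x = 0 := by
        intro x
        by_contra h
        exact hnt ⟨x, h⟩
      exact decomp_trivial M σ hs

end Main

/-- A finitely generated torsion-free `ℤ/2ℤ`-module (given by an involution `σ` of a finitely
generated torsion-free abelian group `M`) decomposes as a direct sum of `σ`-stable submodules,
each equivariantly isomorphic to `ℤ` (trivial action), `ℤ` (sign action), or `ℤ[ℤ/2ℤ] ≅ ℤ²`
(swap action). -/
theorem stmt_2 {M : Type*} [AddCommGroup M] [Module.Finite ℤ M] [NoZeroSMulDivisors ℤ M]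
    (σ : M ≃ₗ[ℤ] M) (hσ : ∀ x : M, σ (σ x) = x) :
    ∃ (n : ℕ) (A : Fin n → Submodule ℤ M), DirectSum.IsInternal A ∧
      ∀ i : Fin n, (∀ x ∈ A i, σ x ∈ A i) ∧
        ((∃ _e : ↥(A i) ≃ₗ[ℤ] ℤ, ∀ x ∈ A i, σ x = x) ∨
         (∃ _e : ↥(A i) ≃ₗ[ℤ] ℤ, ∀ x ∈ A i, σ x = -x) ∨
         (∃ e : ↥(A i) ≃ₗ[ℤ] ℤ × ℤ, ∀ x y : ↥(A i),
            σ (x : M) = (y : M) → e y = Prod.swap (e x))) :=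
  decomp (Module.finrank ℤ M) M σ hσ le_rfl
end

section
/- Let G = Z/2Z and let M be a finitely generated torsion-free G-module. Then M is a permutation G-module (i.e. isomorphic to a direct sum of copies of the trivial module Z and the regular module Z[G]) if and only if the first group cohomology H¹(G, M) vanishes. -/
open Module Submodule
open scoped DirectSum



open Module Submodule

lemma iSup_fin_cons {α : Type*} [CompleteLattice α] {n : ℕ} (a : α) (f : Fin n → α) :
    (⨆ i, Fin.cons a f i) = a ⊔ ⨆ i, f i := by
  apply le_antisymm
  · exact iSup_le (Fin.cases le_sup_left (fun i => le_sup_of_le_right (le_iSup f i)))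
  · exact sup_le (le_iSup_of_le 0 (by simp)) (iSup_le fun i => le_iSup_of_le i.succ (by simp))

lemma iSupIndep_fin_cons {R M : Type*} [Ring R] [AddCommGroup M] [Module R M] {n : ℕ}
    {L : Submodule R M} {A : Fin n → Submodule R M} (hA : iSupIndep A)
    (hd : Disjoint L (⨆ i, A i)) : iSupIndep (Fin.cons L A) := by
  intro i
  induction i using Fin.cases with
  | zero =>
      refine Disjoint.mono_right ?_ hd
      refine iSup_le fun j => iSup_le fun hj => ?_
      induction j using Fin.cases with
      | zero => exact absurd rfl hj
      | succ k => simpa using le_iSup A k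
  | succ k =>
      have hle : (⨆ (j) (_ : j ≠ Fin.succ k), Fin.cons L A j) ≤
          L ⊔ ⨆ (l) (_ : l ≠ k), A l := by
        refine iSup_le fun j => iSup_le fun hj => ?_
        induction j using Fin.cases with
        | zero => simpa using le_sup_left
        | succ l =>
            have hlk : l ≠ k := fun h => hj (by rw [h])
            have : A l ≤ ⨆ (l') (_ : l' ≠ k), A l' := le_iSup₂ (f := fun l' _ => A l') l hlk
            simpa using le_sup_of_le_right this
      refine Disjoint.mono_right hle ?_
      rw [Fin.cons_succ]
      rw [Submodule.disjoint_def]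
      intro x hx hx'
      obtain ⟨l, hl, u, hu, hlu⟩ := Submodule.mem_sup.1 hx'
      have hXle : (⨆ (l') (_ : l' ≠ k), A l') ≤ ⨆ i, A i :=
        iSup_le fun l' => iSup_le fun _ => le_iSup A l'
      have hl0 : l = 0 := by
        have hlmem : l ∈ ⨆ i, A i := by
          have hx2 : x ∈ ⨆ i, A i := le_iSup A k hx
          have hu2 : u ∈ ⨆ i, A i := hXle hu
          have : l = x - u := by rw [← hlu]; abel
          rw [this]; exact Submodule.sub_mem _ hx2 hu2
        exact (Submodule.disjoint_def.1 hd) l hl hlmem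
      have hxu : x = u := by rw [← hlu, hl0, zero_add]
      exact (Submodule.disjoint_def.1 (hA k)) x hx (hxu ▸ hu)

open Module Submodule

lemma exists_indivisible {M : Type*} [AddCommGroup M] [Module.Finite ℤ M]
    [NoZeroSMulDivisors ℤ M] (v : M) (hv : v ≠ 0) :
    ∃ (u : M) (k : ℤ), 0 < k ∧ v = k • u ∧ ∀ (c : ℤ) (w : M), u = c • w → IsUnit c := by
  classical
  haveI : Module.Free ℤ M := Module.free_of_finite_type_torsion_free'
  let b := Module.Free.chooseBasis ℤ M
  obtain ⟨i, hi⟩ : ∃ i, b.repr v i ≠ 0 := by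
    by_contra h
    push_neg at h
    apply hv
    have : b.repr v = 0 := Finsupp.ext h
    simpa using congrArg b.repr.symm this
  set f : M →ₗ[ℤ] ℤ := b.coord i with hf
  have hfv : f v ≠ 0 := hi
  set P : ℕ → Prop := fun n => 0 < n ∧ ∃ w : M, v = (n : ℤ) • w with hP
  set B : ℕ := (f v).natAbs with hB
  have hbound : ∀ n, P n → n ≤ B := by
    rintro n ⟨hn, w, hw⟩
    have hdvd : (n : ℤ) ∣ f v := by
      refine ⟨f w, ?_⟩
      rw [hw]; simp
    have h2 : (n : ℤ) ≤ |f v| := Int.le_of_dvd (abs_pos.2 hfv) ((dvd_abs _ _).2 hdvd)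
    rw [Int.abs_eq_natAbs] at h2
    exact_mod_cast h2
  have hP1 : P 1 := ⟨one_pos, v, by simp⟩
  set k := Nat.findGreatest P B with hk
  have hPk : P k := Nat.findGreatest_spec (hbound 1 hP1) hP1
  obtain ⟨hkpos, u, hu⟩ := hPk
  refine ⟨u, (k : ℤ), by exact_mod_cast hkpos, hu, ?_⟩
  rintro c w rfl
  have hc0 : c ≠ 0 := by
    rintro rfl
    apply hv; rw [hu]; simp
  have hP' : P (k * c.natAbs) := by
    refine ⟨Nat.mul_pos hkpos (Int.natAbs_pos.2 hc0), ?_⟩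
    rcases le_or_gt 0 c with h | h
    · refine ⟨w, ?_⟩
      rw [hu, smul_smul]
      congr 1
      push_cast [Int.natAbs_of_nonneg h]
      ring
    · refine ⟨-w, ?_⟩
      rw [hu, smul_smul, smul_neg, ← neg_smul]
      congr 1
      push_cast [Int.ofNat_natAbs_of_nonpos h.le]
      ring
  have : k * c.natAbs ≤ k := Nat.le_findGreatest (hbound _ hP') hP'
  have : c.natAbs = 1 := by nlinarith [Int.natAbs_pos.2 hc0]
  exact Int.isUnit_iff_natAbs_eq.2 this

lemma sat_of_indivisible {M : Type*} [AddCommGroup M] [NoZeroSMulDivisors ℤ M] {x₀ : M}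
    (hind : ∀ (c : ℤ) (w : M), x₀ = c • w → IsUnit c) {w : M} {c m : ℤ}
    (hc : c ≠ 0) (h : c • w = m • x₀) : ∃ d : ℤ, w = d • x₀ := by
  rcases eq_or_ne m 0 with rfl | hm
  · refine ⟨0, ?_⟩
    have : c • w = c • (0 : M) := by simpa using h
    simpa using smul_right_injective M hc this
  · set g : ℤ := (c.gcd m : ℤ) with hg
    have hgpos : 0 < c.gcd m := Int.gcd_pos_of_ne_zero_left _ hc
    have hg0 : g ≠ 0 := by positivity
    set c' := c / g with hc'
    set m' := m / g with hm'
    have hcc : c = g * c' := by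
      rw [hc', mul_comm]
      exact (Int.ediv_mul_cancel (Int.gcd_dvd_left _ _)).symm
    have hmm : m = g * m' := by
      rw [hm', mul_comm]
      exact (Int.ediv_mul_cancel (Int.gcd_dvd_right _ _)).symm
    have h2 : g • (c' • w) = g • (m' • x₀) := by
      rw [smul_smul, smul_smul, ← hcc, ← hmm, h]
    have h3 : c' • w = m' • x₀ := smul_right_injective M hg0 h2
    have hcop : IsCoprime c' m' := by
      rw [Int.isCoprime_iff_gcd_eq_one, hc', hm', hg]
      exact Int.gcd_div_gcd_div_gcd hgpos
    obtain ⟨a, b, hab⟩ := hcop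
    have hx : x₀ = c' • (a • x₀ + b • w) := by
      calc x₀ = (a * c' + b * m') • x₀ := by rw [hab]; simp
        _ = (c' * a) • x₀ + b • (m' • x₀) := by rw [add_smul, smul_smul, mul_comm a c']
        _ = (c' * a) • x₀ + b • (c' • w) := by rw [h3]
        _ = c' • (a • x₀ + b • w) := by
              rw [smul_add, smul_smul c' a, smul_smul c' b, smul_smul b c', mul_comm b c']
    have hu := hind c' _ hx
    rcases Int.isUnit_iff.1 hu with h1 | h1
    · exact ⟨m', by rw [← h3, h1, one_smul]⟩
    · refine ⟨-m', ?_⟩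
      rw [h1] at h3
      rw [neg_smul, ← h3, neg_smul, one_smul, neg_neg]

open Module Submodule

lemma line_equiv {M : Type*} [AddCommGroup M] [NoZeroSMulDivisors ℤ M] {v : M} (hv : v ≠ 0) :
    Nonempty ((span ℤ {v} : Submodule ℤ M) ≃ₗ[ℤ] ℤ) := by
  have hinj : Function.Injective (LinearMap.toSpanSingleton ℤ M v) :=
    LinearMap.ker_eq_bot.1 (LinearMap.ker_toSpanSingleton ℤ hv)
  exact ⟨((LinearEquiv.ofInjective _ hinj).trans
    (LinearEquiv.ofEq _ _ (LinearMap.span_singleton_eq_range ℤ M v).symm)).symm⟩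

lemma pair_equiv {M : Type*} [AddCommGroup M] (y z : M)
    (hli : ∀ a b : ℤ, a • y + b • z = 0 → a = 0 ∧ b = 0) :
    ∃ e : (span ℤ {y, z} : Submodule ℤ M) ≃ₗ[ℤ] ℤ × ℤ,
      ∀ p : ℤ × ℤ, ((e.symm p : M)) = p.1 • y + p.2 • z := by
  set φ : ℤ × ℤ →ₗ[ℤ] M :=
    LinearMap.coprod (LinearMap.toSpanSingleton ℤ M y) (LinearMap.toSpanSingleton ℤ M z) with hφ
  have hφapp : ∀ p : ℤ × ℤ, φ p = p.1 • y + p.2 • z := fun p => rfl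
  have hinj : Function.Injective φ := by
    intro p q h
    have h0 : φ (p - q) = 0 := by rw [map_sub, h, sub_self]
    rw [hφapp] at h0
    obtain ⟨h1, h2⟩ := hli _ _ h0
    have : p - q = 0 := Prod.ext h1 h2
    exact sub_eq_zero.1 this
  have hrange : LinearMap.range φ = span ℤ {y, z} := by
    rw [hφ, LinearMap.range_coprod, ← LinearMap.span_singleton_eq_range,
      ← LinearMap.span_singleton_eq_range, Set.insert_eq, Submodule.span_union]
  refine ⟨((LinearEquiv.ofInjective φ hinj).trans (LinearEquiv.ofEq _ _ hrange)).symm, ?_⟩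
  intro p
  rfl

open Module Submodule
section
variable {M : Type*} [AddCommGroup M] [Module.Finite ℤ M] [NoZeroSMulDivisors ℤ M]

lemma case_trivial (σ : M ≃ₗ[ℤ] M) (N : Submodule ℤ M)
    (hid : ∀ x ∈ N, σ x = x) :
    ∃ (n : ℕ) (A : Fin n → Submodule ℤ M), iSupIndep A ∧ (⨆ i, A i) = N ∧
      ∀ i, (∀ x ∈ A i, σ x ∈ A i) ∧
        ((∃ _e : ↥(A i) ≃ₗ[ℤ] ℤ, ∀ x ∈ A i, σ x = x) ∨
         (∃ e : ↥(A i) ≃ₗ[ℤ] ℤ × ℤ, ∀ x y : ↥(A i),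
            σ (x : M) = (y : M) → e y = Prod.swap (e x))) := by
  haveI : Module.Finite ℤ N := Module.Finite.iff_fg.2 (IsNoetherian.noetherian N)
  haveI : Module.Free ℤ N := Module.free_of_finite_type_torsion_free'
  set r := finrank ℤ N with hr
  let b : Basis (Fin r) ℤ N := Module.finBasis ℤ N
  refine ⟨r, fun i => span ℤ {(b i : M)}, ?_, ?_, ?_⟩
  · have hli : LinearIndependent ℤ (fun i => ((b i : M))) := by
      have := b.linearIndependent.map' N.subtype N.ker_subtype
      exact this
    exact hli.iSupIndep_span_singleton
  · rw [← Submodule.span_range_eq_iSup]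
    have : Set.range (fun i => ((b i : M))) = N.subtype '' (Set.range b) := by
      rw [← Set.range_comp]; rfl
    rw [this, ← Submodule.map_span, b.span_eq, Submodule.map_subtype_top]
  · intro i
    have hbiN : (b i : M) ∈ N := (b i).2
    have hfix : ∀ x ∈ span ℤ ({(b i : M)} : Set M), σ x = x := by
      intro x hx
      obtain ⟨a, rfl⟩ := Submodule.mem_span_singleton.1 hx
      rw [map_smul, hid _ hbiN]
    refine ⟨fun x hx => by rw [hfix x hx]; exact hx, Or.inl ?_⟩
    have hb0 : ((b i : M)) ≠ 0 := by
      simpa using b.ne_zero i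
    obtain ⟨e⟩ := line_equiv hb0
    exact ⟨e, hfix⟩
end

section
variable {M : Type*} [AddCommGroup M] [Module.Finite ℤ M] [NoZeroSMulDivisors ℤ M]

set_option maxHeartbeats 2000000 in
lemma key (σ : M ≃ₗ[ℤ] M) (hσ : ∀ x : M, σ (σ x) = x) :
    ∀ (k : ℕ) (N : Submodule ℤ M), finrank ℤ N = k →
      (∀ x ∈ N, σ x ∈ N) →
      (∀ x ∈ N, x + σ x = 0 → ∃ y ∈ N, x = y - σ y) →
      ∃ (n : ℕ) (A : Fin n → Submodule ℤ M), iSupIndep A ∧ (⨆ i, A i) = N ∧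
        ∀ i, (∀ x ∈ A i, σ x ∈ A i) ∧
          ((∃ _e : ↥(A i) ≃ₗ[ℤ] ℤ, ∀ x ∈ A i, σ x = x) ∨
           (∃ e : ↥(A i) ≃ₗ[ℤ] ℤ × ℤ, ∀ x y : ↥(A i),
              σ (x : M) = (y : M) → e y = Prod.swap (e x))) := by
  intro k
  induction k using Nat.strong_induction_on with
  | _ k IH =>
  intro N hrank hstab h1
  haveI : Module.Finite ℤ N := Module.Finite.iff_fg.2 (IsNoetherian.noetherian N)
  haveI : Module.Free ℤ N := Module.free_of_finite_type_torsion_free'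
  haveI : NoZeroSMulDivisors ℤ N :=
    Function.Injective.noZeroSMulDivisors _ N.injective_subtype rfl (fun _ _ => rfl)
  by_cases hfix : ∀ x ∈ N, x + σ x = 0 → x = 0
  · -- σ acts trivially on N
    refine case_trivial σ N ?_
    intro x hx
    have hmem : x - σ x ∈ N := Submodule.sub_mem N hx (hstab x hx)
    have h0 : (x - σ x) + σ (x - σ x) = 0 := by
      rw [map_sub, hσ]; abel
    have := hfix _ hmem h0
    exact (sub_eq_zero.1 this).symm
  · push_neg at hfix
    obtain ⟨x, hxN, hx0, hxne⟩ := hfix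
    -- restrict σ to N
    set σN : N →ₗ[ℤ] N := σ.toLinearMap.restrict (p := N) (q := N) (fun w hw => hstab w hw)
      with hσNdef
    have hσNcoe : ∀ w : N, (σN w : M) = σ (w : M) := fun w => rfl
    have hσN2 : ∀ w, σN (σN w) = w := fun w => Subtype.ext (by rw [hσNcoe, hσNcoe, hσ])
    have hN1 : ∀ w : N, w + σN w = 0 → ∃ u : N, w = u - σN u := by
      intro w hw
      have : (w : M) + σ (w : M) = 0 := by
        rw [← hσNcoe]; exact_mod_cast congrArg Subtype.val hw
      obtain ⟨u, huN, hu⟩ := h1 w w.2 this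
      exact ⟨⟨u, huN⟩, Subtype.ext (by rw [hu]; rfl)⟩
    set xN : N := ⟨x, hxN⟩ with hxNdef
    have hxNne : xN ≠ 0 := fun h => hxne (by
      have := congrArg Subtype.val h
      simpa [hxNdef] using this)
    have hxN0 : xN + σN xN = 0 := Subtype.ext (by
      rw [Submodule.coe_add, hσNcoe]; exact hx0)
    obtain ⟨x₀, k₀, hk₀pos, hxk, hx₀ind⟩ := exists_indivisible xN hxNne
    have hk₀ne : k₀ ≠ 0 := hk₀pos.ne'
    have hx₀0 : x₀ + σN x₀ = 0 := by
      have : k₀ • (x₀ + σN x₀) = 0 := by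
        rw [smul_add, ← map_smul, ← hxk, hxN0]
      exact (smul_eq_zero.1 this).resolve_left hk₀ne
    have hx₀ne : x₀ ≠ 0 := by
      rintro rfl; apply hxNne; rw [hxk, smul_zero]
    have hnotunit2 : ¬ IsUnit (2 : ℤ) := by decide
    obtain ⟨y1, hy1⟩ := hN1 x₀ hx₀0
    set s1 : N := y1 + σN y1 with hs1
    have hs1ne : s1 ≠ 0 := by
      intro h
      have h2 : x₀ = (2 : ℤ) • y1 := by
        have h3 : x₀ + s1 = (2 : ℤ) • y1 := by
          rw [hy1, hs1, two_smul]; abel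
        rw [h, add_zero] at h3; exact h3
      exact hnotunit2 (hx₀ind 2 y1 h2)
    obtain ⟨u, ku, hkupos, hsku, huind⟩ := exists_indivisible s1 hs1ne
    have hσs1 : σN s1 = s1 := by
      rw [hs1, map_add, hσN2]; abel
    have hσu : σN u = u := by
      have : ku • σN u = ku • u := by rw [← map_smul, ← hsku, hσs1, hsku]
      exact smul_right_injective _ hkupos.ne' this
    have hune : u ≠ 0 := by rintro rfl; apply hs1ne; rw [hsku, smul_zero]
    -- choose y with y - σN y = x₀ and y + σN y = u
    have hmain : ∃ y : N, y - σN y = x₀ ∧ y + σN y = u := by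
      rcases Int.even_or_odd ku with ⟨j, hj⟩ | ⟨j, hj⟩
      · exfalso
        set y' : N := y1 - j • u with hy'
        have h2y' : y' + σN y' = 0 := by
          rw [hy', map_sub, map_smul, hσu]
          have : y1 - j • u + (σN y1 - j • u) = s1 - (j + j) • u := by
            rw [hs1, add_smul]; abel
          rw [this, ← hj, ← hsku, sub_self]
        have hx₀y' : x₀ = (2 : ℤ) • y' := by
          have hsub : y' - σN y' = x₀ := by
            rw [hy', map_sub, map_smul, hσu, hy1]; abel
          have h4 : (y' - σN y') + (y' + σN y') = (2 : ℤ) • y' := by rw [two_smul]; abel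
          rw [hsub, h2y', add_zero] at h4
          exact h4
        exact hnotunit2 (hx₀ind 2 y' hx₀y')
      · refine ⟨y1 - j • u, ?_, ?_⟩
        · rw [map_sub, map_smul, hσu, hy1]; abel
        · rw [map_sub, map_smul, hσu]
          have : y1 - j • u + (σN y1 - j • u) = s1 - (2 * j) • u := by
            rw [hs1, two_mul, add_smul]; abel
          rw [this, hsku, ← sub_smul, hj]
          norm_num
    obtain ⟨y, hyx₀, hyu⟩ := hmain
    set z : N := σN y with hz
    have hσz : σN z = y := by rw [hz, hσN2]
    -- linear independence of y, z
    have hli : ∀ a b : ℤ, a • y + b • z = 0 → a = 0 ∧ b = 0 := by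
      intro a b hab
      have hab2 : a • z + b • y = 0 := by
        have := congrArg σN hab
        rw [map_add, map_smul, map_smul, hσz, ← hz, map_zero] at this
        linear_combination (norm := abel) this
      have hsub : (a - b) • x₀ = 0 := by
        rw [← hyx₀, smul_sub, sub_smul, sub_smul]
        have : a • y - b • y - (a • z - b • z) = (a • y + b • z) - (a • z + b • y) := by abel
        rw [this, hab, hab2, sub_self]
      have hb : a = b := by
        have := (smul_eq_zero.1 hsub).resolve_right hx₀ne
        omega
      have ha : a • u = 0 := by
        rw [← hyu, smul_add]
        rw [hb] at hab ⊢
        exact hab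
      have : a = 0 := (smul_eq_zero.1 ha).resolve_right hune
      exact ⟨this, by omega⟩
    -- the span L' of y, z
    set L' : Submodule ℤ N := span ℤ {y, z} with hL'def
    obtain ⟨e', he'⟩ := pair_equiv y z hli
    have hyL : y ∈ L' := subset_span (Set.mem_insert _ _)
    have hzL : z ∈ L' := subset_span (Set.mem_insert_of_mem _ rfl)
    have he'y : e' ⟨y, hyL⟩ = (1, 0) := by
      have h5 : e'.symm (1, 0) = ⟨y, hyL⟩ := Subtype.ext (by rw [he' (1, 0)]; simp)
      rw [← h5, e'.apply_symm_apply]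
    have he'z : e' ⟨z, hzL⟩ = (0, 1) := by
      have h5 : e'.symm (0, 1) = ⟨z, hzL⟩ := Subtype.ext (by rw [he' (0, 1)]; simp)
      rw [← h5, e'.apply_symm_apply]
    have hσcomb : ∀ a b : ℤ, σN (a • y + b • z) = a • z + b • y := by
      intro a b
      rw [map_add, map_smul, map_smul, hσz, ← hz]
    have hL'stab : ∀ w ∈ L', σN w ∈ L' := by
      intro w hw
      obtain ⟨a, b, hab⟩ := mem_span_pair.1 hw
      rw [← hab, hσcomb]
      exact add_mem (smul_mem _ _ hzL) (smul_mem _ _ hyL)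
    -- saturation of L'
    have hsatL : ∀ (w : N) (c : ℤ), c ≠ 0 → c • w ∈ L' → w ∈ L' := by
      intro w c hc hcw
      obtain ⟨a, b, hab⟩ := mem_span_pair.1 hcw
      have hσcw : a • z + b • y = c • σN w := by
        have h6 := congrArg σN hab
        rwa [hσcomb, map_smul] at h6
      have hdiff : c • (w - σN w) = (a - b) • x₀ := by
        have h6 : c • w - c • σN w = (a • y + b • z) - (a • z + b • y) := by
          rw [hab, hσcw]
        have h7 : (a • y + b • z) - (a • z + b • y) = (a - b) • (y - z) := by
          rw [smul_sub, sub_smul, sub_smul]; abel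
        rw [smul_sub, h6, h7, hyx₀]
      obtain ⟨d, hd⟩ := sat_of_indivisible hx₀ind hc hdiff
      have hcd : c * d = a - b := by
        have h6 : (c * d) • x₀ = (a - b) • x₀ := by
          rw [← smul_smul, ← hd, hdiff]
        have h7 : ((c * d) - (a - b)) • x₀ = 0 := by rw [sub_smul, h6, sub_self]
        have := (smul_eq_zero.1 h7).resolve_right hx₀ne
        omega
      have hw2 : c • (w - d • y) = b • (y + z) := by
        have h8 : c • (w - d • y) = a • y + b • z - (a - b) • y := by
          rw [smul_sub, smul_smul, hcd, ← hab]
        rw [h8, sub_smul, smul_add]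
        abel
      have hbu : c • (w - d • y) = b • u := by rw [hw2, hyu]
      obtain ⟨d', hd'⟩ := sat_of_indivisible huind hc hbu
      refine mem_span_pair.2 ⟨d + d', d', ?_⟩
      have h9 : w - d • y = d' • y + d' • z := by rw [hd', ← hyu, smul_add]
      have h10 := sub_eq_iff_eq_add.1 h9
      rw [add_smul, h10]
      abel
    -- quotient by L' is torsion-free, hence free; get a splitting
    haveI hQtf : NoZeroSMulDivisors ℤ (N ⧸ L') := by
      constructor
      intro c q hcq
      rcases eq_or_ne c 0 with rfl | hc
      · exact Or.inl rfl
      · refine Or.inr ?_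
        obtain ⟨w, rfl⟩ := L'.mkQ_surjective q
        have hmk : L'.mkQ (c • w) = 0 := by rw [map_smul]; exact hcq
        have : c • w ∈ L' := by
          rwa [Submodule.mkQ_apply, Submodule.Quotient.mk_eq_zero] at hmk
        have := hsatL w c hc this
        rw [Submodule.mkQ_apply, Submodule.Quotient.mk_eq_zero]
        exact this
    haveI : Module.Finite ℤ (N ⧸ L') := Module.Finite.of_surjective L'.mkQ L'.mkQ_surjective
    haveI : Module.Free ℤ (N ⧸ L') := Module.free_of_finite_type_torsion_free'
    obtain ⟨g, hg⟩ := Module.projective_lifting_property L'.mkQ LinearMap.id L'.mkQ_surjective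
    set q0 : N →ₗ[ℤ] N := LinearMap.id - g ∘ₗ L'.mkQ with hq0
    have hgmk : ∀ t : N ⧸ L', L'.mkQ (g t) = t := by
      intro t
      have := congrArg (fun φ => φ t) hg
      simpa using this
    have hq0mem : ∀ w : N, q0 w ∈ L' := by
      intro w
      have hmk : L'.mkQ (q0 w) = 0 := by
        rw [hq0]
        simp only [LinearMap.sub_apply, LinearMap.id_apply, LinearMap.comp_apply, map_sub]
        rw [hgmk, sub_self]
      rwa [Submodule.mkQ_apply, Submodule.Quotient.mk_eq_zero] at hmk
    have hq0l : ∀ l : N, l ∈ L' → q0 l = l := by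
      intro l hl
      rw [hq0]
      simp only [LinearMap.sub_apply, LinearMap.id_apply, LinearMap.comp_apply]
      have : L'.mkQ l = 0 := by rw [Submodule.mkQ_apply, Submodule.Quotient.mk_eq_zero]; exact hl
      rw [this, map_zero, sub_zero]
    -- the equivariant coordinate functional
    set f : N →ₗ[ℤ] ℤ :=
      LinearMap.fst ℤ ℤ ℤ ∘ₗ (e' : L' →ₗ[ℤ] ℤ × ℤ) ∘ₗ LinearMap.codRestrict L' q0 hq0mem
      with hfdef
    have hfval : ∀ w : N, f w = (e' ⟨q0 w, hq0mem w⟩).1 := fun w => rfl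
    have hfy : f y = 1 := by
      rw [hfval]
      have h11 : (⟨q0 y, hq0mem y⟩ : L') = ⟨y, hyL⟩ := Subtype.ext (hq0l y hyL)
      rw [h11, he'y]
    have hfz : f z = 0 := by
      rw [hfval]
      have h11 : (⟨q0 z, hq0mem z⟩ : L') = ⟨z, hzL⟩ := Subtype.ext (hq0l z hzL)
      rw [h11, he'z]
    have hfcomb : ∀ a b : ℤ, f (a • y + b • z) = a := by
      intro a b
      rw [map_add, map_smul, map_smul, hfy, hfz]
      simp
    have hfcomb2 : ∀ a b : ℤ, f (a • z + b • y) = b := by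
      intro a b
      rw [map_add, map_smul, map_smul, hfy, hfz]
      simp
    set C' : Submodule ℤ N := LinearMap.ker (LinearMap.prod f (f ∘ₗ σN)) with hC'def
    have hC'mem : ∀ w : N, w ∈ C' ↔ f w = 0 ∧ f (σN w) = 0 := by
      intro w
      rw [hC'def, LinearMap.mem_ker, LinearMap.prod_apply]
      simp [Prod.ext_iff]
    have hdec : ∀ w : N, w - (f w • y + f (σN w) • z) ∈ C' := by
      intro w
      rw [hC'mem]
      constructor
      · rw [map_sub, hfcomb, sub_self]
      · rw [map_sub, map_sub, hσcomb, hfcomb2, sub_self]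
    have hdisj : ∀ w : N, w ∈ L' → w ∈ C' → w = 0 := by
      intro w hw hwc
      obtain ⟨a, b, hab⟩ := mem_span_pair.1 hw
      obtain ⟨h1', h2'⟩ := (hC'mem w).1 hwc
      have ha : a = 0 := by rw [← hab, hfcomb] at h1'; exact h1'
      have hbb : b = 0 := by rw [← hab, hσcomb, hfcomb2] at h2'; exact h2'
      rw [← hab, ha, hbb]
      simp
    have hC'stab : ∀ w ∈ C', σN w ∈ C' := by
      intro w hw
      obtain ⟨h1', h2'⟩ := (hC'mem w).1 hw
      exact (hC'mem _).2 ⟨h2', by rwa [hσN2]⟩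
    have hsupd : ∀ w : N, ∃ l ∈ L', ∃ c ∈ C', w = l + c := by
      intro w
      exact ⟨f w • y + f (σN w) • z, add_mem (smul_mem _ _ hyL) (smul_mem _ _ hzL),
        w - (f w • y + f (σN w) • z), hdec w, by abel⟩
    -- M-level submodules
    set L : Submodule ℤ M := L'.map N.subtype with hLdef
    set C : Submodule ℤ M := C'.map N.subtype with hCdef
    have hCstab : ∀ v ∈ C, σ v ∈ C := by
      rintro v ⟨w, hw, rfl⟩
      exact ⟨σN w, hC'stab w hw, (hσNcoe w).symm⟩
    have hC1 : ∀ v ∈ C, v + σ v = 0 → ∃ t ∈ C, v = t - σ t := by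
      rintro v ⟨w, hw, rfl⟩ hv0
      have hw0 : w + σN w = 0 := Subtype.ext (by
        rw [Submodule.coe_add, hσNcoe]
        exact hv0)
      obtain ⟨m, hm⟩ := hN1 w hw0
      obtain ⟨l, hlL, c, hcC, hmlc⟩ := hsupd m
      have hkey : w = c - σN c := by
        have hLel : (m - σN m) - (c - σN c) = l - σN l := by
          rw [hmlc, map_add]; abel
        have hmemL : w - (c - σN c) ∈ L' := by
          rw [hm, hLel]
          exact sub_mem hlL (hL'stab l hlL)
        have hmemC : w - (c - σN c) ∈ C' := sub_mem hw (sub_mem hcC (hC'stab c hcC))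
        exact sub_eq_zero.1 (hdisj _ hmemL hmemC)
      refine ⟨(c : M), ⟨c, hcC, rfl⟩, ?_⟩
      calc (w : M) = ((c - σN c : N) : M) := congrArg Subtype.val hkey
        _ = (c : M) - σ (c : M) := by rw [Submodule.coe_sub, hσNcoe]
    -- rank bookkeeping
    have hcompl : IsCompl L' C' := by
      constructor
      · exact Submodule.disjoint_def.2 hdisj
      · rw [codisjoint_iff, eq_top_iff]
        intro w _
        obtain ⟨l, hl, c, hc, hw⟩ := hsupd w
        exact Submodule.mem_sup.2 ⟨l, hl, c, hc, hw.symm⟩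
    haveI : Module.Finite ℤ L' := Module.Finite.iff_fg.2 (IsNoetherian.noetherian L')
    haveI : Module.Finite ℤ C' := Module.Finite.iff_fg.2 (IsNoetherian.noetherian C')
    haveI : Module.Free ℤ L' := Module.free_of_finite_type_torsion_free'
    haveI : Module.Free ℤ C' := Module.free_of_finite_type_torsion_free'
    have hrankL' : finrank ℤ L' = 2 := by
      rw [e'.finrank_eq, Module.finrank_prod, Module.finrank_self]
    have hrankeq : finrank ℤ N = 2 + finrank ℤ C' := by
      have h11 := (Submodule.prodEquivOfIsCompl L' C' hcompl).finrank_eq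
      rw [Module.finrank_prod, hrankL'] at h11
      exact h11.symm
    have hrankC : finrank ℤ C = finrank ℤ C' :=
      (Submodule.equivMapOfInjective N.subtype N.injective_subtype C').finrank_eq.symm
    have hlt : finrank ℤ C < k := by
      rw [hrankeq] at hrank
      omega
    obtain ⟨n, A, hAind, hAsup, hAprop⟩ := IH (finrank ℤ C) hlt C rfl hCstab hC1
    -- assemble
    have hLCdisj : Disjoint L C := by
      rw [Submodule.disjoint_def]
      rintro v ⟨w, hw, rfl⟩ ⟨w', hw', hww⟩
      have hww' : w' = w := N.injective_subtype hww
      rw [hww'] at hw'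
      rw [hdisj w hw hw']
      simp
    refine ⟨n + 1, Fin.cons L A, iSupIndep_fin_cons hAind (by rwa [hAsup]), ?_, ?_⟩
    · rw [iSup_fin_cons, hAsup, hLdef, hCdef, ← Submodule.map_sup,
        codisjoint_iff.1 hcompl.codisjoint, Submodule.map_subtype_top]
    · intro i
      induction i using Fin.cases with
      | succ j =>
          exact hAprop j
      | zero =>
          rw [Fin.cons_zero]
          constructor
          · rintro v ⟨w, hw, rfl⟩
            exact ⟨σN w, hL'stab w hw, (hσNcoe w).symm⟩
          · refine Or.inr ?_
            set em := Submodule.equivMapOfInjective N.subtype N.injective_subtype L' with hem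
            refine ⟨em.symm.trans e', ?_⟩
            intro p q hpq
            have hcoe : ∀ r : L, (((em.symm r : L') : N) : M) = (r : M) := by
              intro r
              have h12 : em (em.symm r) = r := em.apply_symm_apply r
              have h13 := congrArg Subtype.val h12
              rw [← h13]
              rfl
            set pa := e' (em.symm p) with hpa
            have hab : σN ((em.symm p : L') : N) = ((em.symm q : L') : N) := by
              refine Subtype.ext ?_
              rw [hσNcoe, hcoe, hcoe]
              exact hpq
            have ha' : ((em.symm p : L') : N) = pa.1 • y + pa.2 • z := by
              rw [hpa, ← he' (e' (em.symm p)), e'.symm_apply_apply]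
            have hb' : ((em.symm q : L') : N) = pa.2 • y + pa.1 • z := by
              rw [← hab, ha', hσcomb]
              abel
            have hbeq : em.symm q = e'.symm (pa.2, pa.1) := by
              apply Subtype.coe_injective
              show ((em.symm q : L') : N) = ((e'.symm (pa.2, pa.1) : L') : N)
              rw [he' (pa.2, pa.1)]
              exact hb'
            show (em.symm.trans e') q = Prod.swap ((em.symm.trans e') p)
            rw [LinearEquiv.trans_apply, LinearEquiv.trans_apply, hbeq,
              e'.apply_symm_apply, ← hpa]
            rfl

end

/-- A finitely generated torsion-free `ℤ/2ℤ`-module (given by an involution `σ` of a finitely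
generated torsion-free abelian group `M`) is a permutation module — i.e. a direct sum of
`σ`-stable submodules each equivariantly isomorphic to the trivial module `ℤ` or the regular
module `ℤ[ℤ/2ℤ] ≅ ℤ²` — if and only if `H¹(ℤ/2ℤ, M) = ker(1+σ)/im(1−σ)` vanishes. -/
theorem stmt_3 {M : Type*} [AddCommGroup M] [Module.Finite ℤ M] [NoZeroSMulDivisors ℤ M]
    (σ : M ≃ₗ[ℤ] M) (hσ : ∀ x : M, σ (σ x) = x) :
    (∃ (n : ℕ) (A : Fin n → Submodule ℤ M), DirectSum.IsInternal A ∧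
      ∀ i : Fin n, (∀ x ∈ A i, σ x ∈ A i) ∧
        ((∃ _e : ↥(A i) ≃ₗ[ℤ] ℤ, ∀ x ∈ A i, σ x = x) ∨
         (∃ e : ↥(A i) ≃ₗ[ℤ] ℤ × ℤ, ∀ x y : ↥(A i),
            σ (x : M) = (y : M) → e y = Prod.swap (e x)))) ↔
    (∀ x : M, x + σ x = 0 → ∃ y : M, x = y - σ y) := by
  constructor
  · rintro ⟨n, A, hint, hprop⟩ x hx
    classical
    -- per-piece vanishing of H¹
    have piece : ∀ (i : Fin n) (a : ↥(A i)), (a : M) + σ a = 0 →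
        ∃ b : ↥(A i), (a : M) = (b : M) - σ (b : M) := by
      intro i a ha
      rcases (hprop i).2 with ⟨e, hfix⟩ | ⟨e, hswap⟩
      · have hfa : σ (a : M) = a := hfix a a.2
        rw [hfa] at ha
        have h2 : (2 : ℤ) • (a : M) = 0 := by rw [two_smul]; exact ha
        have ha0 : (a : M) = 0 := by
          rcases smul_eq_zero.1 h2 with h | h
          · exact absurd h (by norm_num)
          · exact h
        exact ⟨0, by simp [ha0]⟩
      · have haA : σ (a : M) ∈ A i := (hprop i).1 a a.2
        set a' : ↥(A i) := ⟨σ a, haA⟩ with ha'def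
        have hea' : e a' = Prod.swap (e a) := hswap a a' rfl
        have hsum : a + a' = 0 := Subtype.ext (by rw [Submodule.coe_add]; exact ha)
        have hesum : e a + e a' = 0 := by rw [← map_add, hsum, map_zero]
        set t := (e a).1 with ht
        have ht2 : (e a).2 = -t := by
          have h3 := congrArg Prod.snd hesum
          rw [Prod.snd_add, hea'] at h3
          simp only [Prod.snd_swap, Prod.snd_zero] at h3
          omega
        set b := e.symm (t, 0) with hb
        have hbA : σ (b : M) ∈ A i := (hprop i).1 b b.2
        set b' : ↥(A i) := ⟨σ b, hbA⟩ with hb'def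
        have heb' : e b' = Prod.swap (e b) := hswap b b' rfl
        have heb : e b = (t, 0) := by rw [hb, e.apply_symm_apply]
        have hdiff : e (b - b') = e a := by
          rw [map_sub, heb', heb]
          have hea : e a = (t, -t) := by
            have h9 := Prod.mk.eta (p := e a)
            rw [← h9, ht2, ← ht]
          rw [hea]
          simp [Prod.swap_prod_mk, Prod.mk_sub_mk]
        have hba : b - b' = a := e.injective hdiff
        refine ⟨b, ?_⟩
        have h4 := congrArg Subtype.val hba
        rw [Submodule.coe_sub] at h4
        exact h4.symm
    -- assemble over the direct sum
    set Φ : (⨁ i, ↥(A i)) →ₗ[ℤ] M := DirectSum.coeLinearMap A with hΦ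
    have hbij : Function.Bijective Φ := hint
    obtain ⟨w, rfl⟩ := hbij.2 x
    set s : ∀ i : Fin n, ↥(A i) →ₗ[ℤ] ↥(A i) :=
      fun i => σ.toLinearMap.restrict (p := A i) (q := A i) (fun v hv => (hprop i).1 v hv)
      with hs
    have hscoe : ∀ (i : Fin n) (a : ↥(A i)), ((s i a : M)) = σ (a : M) := fun i a => rfl
    set τ : (⨁ i, ↥(A i)) →ₗ[ℤ] (⨁ i, ↥(A i)) := DFinsupp.mapRange.linearMap s with hτ
    have hτap : ∀ (v : ⨁ i, ↥(A i)) (i : Fin n), (τ v) i = s i (v i) := by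
      intro v i
      rw [hτ]
      exact DFinsupp.mapRange_apply _ (fun j => map_zero (s j)) v i
    have hof : ∀ (i : Fin n) (a : ↥(A i)),
        τ (DirectSum.of (fun j => ↥(A j)) i a) = DirectSum.of (fun j => ↥(A j)) i (s i a) := by
      intro i a
      refine DFinsupp.ext fun j => ?_
      rw [hτap]
      rcases eq_or_ne j i with rfl | hne
      · rw [DirectSum.of_eq_same, DirectSum.of_eq_same]
      · rw [DirectSum.of_eq_of_ne _ _ _ hne, DirectSum.of_eq_of_ne _ _ _ hne,
          map_zero]
    have hcommL : Φ ∘ₗ τ = σ.toLinearMap ∘ₗ Φ := by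
      refine DirectSum.linearMap_ext ℤ fun i => ?_
      ext a
      simp only [LinearMap.comp_apply, DirectSum.lof_eq_of]
      rw [hof, hΦ, DirectSum.coeLinearMap_of, DirectSum.coeLinearMap_of]
      exact (hscoe i a)
    have hcomm : ∀ v, Φ (τ v) = σ (Φ v) := fun v => LinearMap.congr_fun hcommL v
    have hw0 : w + τ w = 0 := by
      apply hbij.1
      rw [map_add, hcomm, map_zero]
      exact hx
    have hcomp : ∀ i, (w i : M) + σ (w i : M) = 0 := by
      intro i
      have h5 := congrArg (fun v => v i) hw0
      simp only [DirectSum.add_apply, DirectSum.zero_apply] at h5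
      rw [hτap] at h5
      have h6 := congrArg Subtype.val h5
      rw [Submodule.coe_add, hscoe] at h6
      simpa using h6
    set χ : ∀ i : Fin n, ↥(A i) → ↥(A i) := fun i a =>
      if ha : a = 0 then 0 else
        if h : ((a : M) + σ a = 0) then Classical.choose (piece i a h) else 0
      with hχ
    have hχ0 : ∀ i, χ i 0 = 0 := fun i => by rw [hχ]; simp
    set u : ⨁ i, ↥(A i) := DFinsupp.mapRange χ hχ0 w with hu
    have huap : ∀ i, u i = χ i (w i) := fun i => DFinsupp.mapRange_apply _ _ _ _
    have hkey : u - τ u = w := by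
      refine DFinsupp.ext fun i => ?_
      have h7 : (u - τ u) i = u i - (τ u) i := DirectSum.sub_apply _ _ _
      rw [h7, hτap, huap]
      by_cases hwi : w i = 0
      · rw [hwi, hχ0 i]
        simp
      · have hcc : χ i (w i) = Classical.choose (piece i (w i) (hcomp i)) := by
          rw [hχ]
          simp only []
          rw [dif_neg hwi, dif_pos (hcomp i)]
        have hspec := Classical.choose_spec (piece i (w i) (hcomp i))
        apply Subtype.ext
        rw [Submodule.coe_sub, hcc, hscoe]
        exact hspec.symm
    refine ⟨Φ u, ?_⟩
    rw [← hcomm, ← map_sub, hkey]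
  · intro h1
    obtain ⟨n, A, hind, hsup, hprop⟩ := key σ hσ (finrank ℤ (⊤ : Submodule ℤ M)) ⊤ rfl
      (fun x _ => Submodule.mem_top)
      (fun x _ hx => by obtain ⟨y, hy⟩ := h1 x hx; exact ⟨y, Submodule.mem_top, hy⟩)
    exact ⟨n, A, DirectSum.isInternal_submodule_of_iSupIndep_of_iSup_eq_top hind hsup, hprop⟩
end
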